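/- Let X be a finite set and let P be a set of partial functions from the power set P(X) to P(X). Assume that for each p ∈ P there is a permutation σ_p of X such that p(a) = σ_p[a] (the image of the set a under σ_p) for each a in dom(p). Then there exists a map φ: P → Sym(X) such that (i) p(a) = φ(p)[a] for all a ∈ dom(p), and (ii) φ is coherent: whenever (p₁, p₂, q) ∈ P³ satisfies dom(p₂) = dom(q), range(p₁) = range(q), range(p₂) = dom(p₁), and q = p₁ ∘ p₂, then φ(q) = φ(p₁) ∘ φ(p₂). -/

import Mathlib

/-- A partial function on a type `α`: a domain together with a map
(values outside the domain are irrelevant). -/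
structure PartFun (α : Type*) where
  dom : Set α
  toFun : α → α

/-- The range of a partial function. -/
def PartFun.ran {α : Type*} (p : PartFun α) : Set α := p.toFun '' p.dom

/-- A triple `(p₁, p₂, q)` of partial functions is coherent if `dom(p₂) = dom(q)`,
`range(p₁) = range(q)`, `range(p₂) = dom(p₁)` and `q = p₁ ∘ p₂` on `dom(q)`. -/
def PartFun.CoherentTriple {α : Type*} (p₁ p₂ q : PartFun α) : Prop :=
  p₂.dom = q.dom ∧ p₁.ran = q.ran ∧ p₂.ran = p₁.dom ∧
    ∀ a ∈ q.dom, q.toFun a = p₁.toFun (p₂.toFun a)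

section Aux

variable {X : Type*} [Fintype X] [LinearOrder X]

/-- `σ` induces the partial function `p`. -/
def Induces (p : PartFun (Set X)) (σ : Equiv.Perm X) : Prop :=
  ∀ a ∈ p.dom, p.toFun a = ⇑σ '' a

open Classical in
/-- The class of `x` with respect to a family `F` of subsets: all points with the
same membership pattern. -/
noncomputable def cls (F : Set (Set X)) (x : X) : Finset X :=
  Finset.univ.filter (fun y => ∀ a ∈ F, (y ∈ a ↔ x ∈ a))

lemma mem_cls_iff {F : Set (Set X)} {x y : X} :
    y ∈ cls F x ↔ ∀ a ∈ F, (y ∈ a ↔ x ∈ a) := by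
  simp [cls]

lemma mem_cls_self {F : Set (Set X)} {x : X} : x ∈ cls F x := by
  simp [mem_cls_iff]

lemma cls_eq_of_mem {F : Set (Set X)} {x y : X} (h : y ∈ cls F x) :
    cls F y = cls F x := by
  rw [mem_cls_iff] at h
  ext z
  simp only [mem_cls_iff]
  exact ⟨fun hz a ha => (hz a ha).trans (h a ha), fun hz a ha => (hz a ha).trans (h a ha).symm⟩

lemma image_cls {p : PartFun (Set X)} {σ : Equiv.Perm X} (hσ : Induces p σ) (x : X) :
    (cls p.dom x).image σ = cls p.ran (σ x) := by
  ext z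
  simp only [Finset.mem_image, mem_cls_iff]
  constructor
  · rintro ⟨y, hy, rfl⟩ b hb
    obtain ⟨a, ha, rfl⟩ := hb
    rw [hσ a ha]
    rw [Set.mem_image_equiv, Set.mem_image_equiv, Equiv.symm_apply_apply,
      Equiv.symm_apply_apply]
    exact hy a ha
  · intro hz
    refine ⟨σ.symm z, fun a ha => ?_, σ.apply_symm_apply z⟩
    have := hz (p.toFun a) ⟨a, ha, rfl⟩
    rw [hσ a ha, Set.mem_image_equiv, Set.mem_image_equiv, Equiv.symm_apply_apply] at this
    exact this

lemma card_cls {p : PartFun (Set X)} {σ : Equiv.Perm X} (hσ : Induces p σ) (x : X) :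
    (cls p.ran (σ x)).card = (cls p.dom x).card := by
  rw [← image_cls hσ x, Finset.card_image_of_injective _ σ.injective]

lemma indep_cls {p : PartFun (Set X)} {σ σ' : Equiv.Perm X} (hσ : Induces p σ)
    (hσ' : Induces p σ') (x : X) : σ' x ∈ cls p.ran (σ x) := by
  rw [mem_cls_iff]
  rintro b ⟨a, ha, rfl⟩
  have h1 : (σ' x ∈ p.toFun a) ↔ x ∈ a := by
    rw [hσ' a ha, Set.mem_image_equiv, Equiv.symm_apply_apply]
  have h2 : (σ x ∈ p.toFun a) ↔ x ∈ a := by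
    rw [hσ a ha, Set.mem_image_equiv, Equiv.symm_apply_apply]
  rw [h1, h2]

open Classical in
/-- A canonical inducing permutation (junk value if none exists). -/
noncomputable def indPerm (p : PartFun (Set X)) : Equiv.Perm X :=
  if h : ∃ σ, Induces p σ then h.choose else 1

lemma indPerm_spec {p : PartFun (Set X)} (h : ∃ σ, Induces p σ) :
    Induces p (indPerm p) := by
  classical
  rw [indPerm, dif_pos h]
  exact h.choose_spec

/-- The underlying function of the canonical permutation attached to `p`:
map `x` to the element of the target class with the same rank as `x` in its class. -/
noncomputable def phiFun (p : PartFun (Set X)) (x : X) : X :=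
  ((cls p.ran (indPerm p x)).sort (· ≤ ·)).getD
    (((cls p.dom x).sort (· ≤ ·)).idxOf x) x

lemma idx_lt {F : Set (Set X)} (x : X) :
    ((cls F x).sort (· ≤ ·)).idxOf x < (cls F x).card := by
  rw [← Finset.length_sort (α := X) (· ≤ ·)]
  exact List.idxOf_lt_length_iff.2 ((Finset.mem_sort _).2 mem_cls_self)

lemma phiFun_eq {p : PartFun (Set X)} (h : ∃ σ, Induces p σ) (x : X) :
    phiFun p x = ((cls p.ran (indPerm p x)).sort (· ≤ ·))[
      ((cls p.dom x).sort (· ≤ ·)).idxOf x]'(by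
        rw [Finset.length_sort, card_cls (indPerm_spec h) x]; exact idx_lt x) := by
  rw [phiFun, List.getD_eq_getElem]

lemma phiFun_mem {p : PartFun (Set X)} (h : ∃ σ, Induces p σ) (x : X) :
    phiFun p x ∈ cls p.ran (indPerm p x) := by
  rw [phiFun_eq h x]
  exact (Finset.mem_sort _).1 (List.getElem_mem _)

lemma phiFun_idx {p : PartFun (Set X)} (h : ∃ σ, Induces p σ) (x : X) :
    ((cls p.ran (indPerm p x)).sort (· ≤ ·)).idxOf (phiFun p x)
      = ((cls p.dom x).sort (· ≤ ·)).idxOf x := by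
  rw [phiFun_eq h x]
  exact List.Nodup.idxOf_getElem (Finset.sort_nodup _ _) _ _

lemma phiFun_inj {p : PartFun (Set X)} (h : ∃ σ, Induces p σ) :
    Function.Injective (phiFun p) := by
  intro x x' hxx'
  set σ := indPerm p with hσdef
  have hσ := indPerm_spec h
  -- the two target classes coincide
  have hD : cls p.ran (σ x) = cls p.ran (σ x') := by
    have h1 := phiFun_mem h x
    have h2 := phiFun_mem h x'
    rw [hxx'] at h1
    rw [← cls_eq_of_mem h1, ← cls_eq_of_mem h2]
  -- hence the source classes coincide
  have hC : cls p.dom x = cls p.dom x' := by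
    have : σ x' ∈ cls p.ran (σ x) := hD ▸ mem_cls_self
    rw [← image_cls hσ x] at this
    obtain ⟨y, hy, hyx⟩ := Finset.mem_image.1 this
    have : x' ∈ cls p.dom x := σ.injective hyx ▸ hy
    exact (cls_eq_of_mem this).symm
  -- same indices
  have hidx : ((cls p.dom x).sort (· ≤ ·)).idxOf x
      = ((cls p.dom x').sort (· ≤ ·)).idxOf x' := by
    rw [← phiFun_idx h x, ← phiFun_idx h x', hxx', hD]
  rw [hC] at hidx
  have hx : x ∈ ((cls p.dom x').sort (· ≤ ·)) := by
    rw [← hC]; exact (Finset.mem_sort _).2 mem_cls_self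
  have hx' : x' ∈ ((cls p.dom x').sort (· ≤ ·)) := (Finset.mem_sort _).2 mem_cls_self
  have := List.idxOf_inj (y := x') hx
  exact this.1 hidx

open Classical in
/-- The canonical coherent choice of permutation. -/
noncomputable def phi (p : PartFun (Set X)) : Equiv.Perm X :=
  if h : ∃ σ, Induces p σ then
    Equiv.ofBijective (phiFun p) (Finite.injective_iff_bijective.1 (phiFun_inj h))
  else 1

lemma phi_apply {p : PartFun (Set X)} (h : ∃ σ, Induces p σ) (x : X) :
    phi p x = phiFun p x := by
  classical
  rw [phi, dif_pos h]
  rfl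

lemma phi_induces {p : PartFun (Set X)} (h : ∃ σ, Induces p σ) :
    Induces p (phi p) := by
  intro a ha
  set σ := indPerm p with hσdef
  have hσ := indPerm_spec h
  -- first: φ '' a ⊆ σ '' a
  have hsub : ⇑(phi p) '' a ⊆ ⇑σ '' a := by
    rintro _ ⟨x, hx, rfl⟩
    rw [phi_apply h]
    have hmem := phiFun_mem h x
    rw [mem_cls_iff] at hmem
    have := (hmem (p.toFun a) ⟨a, ha, rfl⟩).2
    rw [hσ a ha] at this
    exact this ⟨x, hx, rfl⟩
  have hcard : (⇑σ '' a).ncard ≤ (⇑(phi p) '' a).ncard := by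
    rw [Set.ncard_image_of_injective _ σ.injective,
      Set.ncard_image_of_injective _ (phi p).injective]
  rw [hσ a ha]
  exact (Set.eq_of_subset_of_ncard_le hsub hcard (Set.toFinite _)).symm

lemma induces_comp {p₁ p₂ q : PartFun (Set X)} {σ₁ σ₂ : Equiv.Perm X}
    (h₁ : Induces p₁ σ₁) (h₂ : Induces p₂ σ₂) (hc : PartFun.CoherentTriple p₁ p₂ q) :
    Induces q (σ₁ * σ₂) := by
  obtain ⟨hdom, hran, hmid, hcomp⟩ := hc
  intro a ha
  have ha₂ : a ∈ p₂.dom := hdom ▸ ha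
  have hp₂a : p₂.toFun a ∈ p₁.dom := hmid ▸ ⟨a, ha₂, rfl⟩
  rw [hcomp a ha, h₁ _ hp₂a, h₂ a ha₂, ← Set.image_comp]
  rfl

lemma phi_comp {p₁ p₂ q : PartFun (Set X)} (h₁ : ∃ σ, Induces p₁ σ)
    (h₂ : ∃ σ, Induces p₂ σ) (hq : ∃ σ, Induces q σ)
    (hc : PartFun.CoherentTriple p₁ p₂ q) :
    phi q = phi p₁ * phi p₂ := by
  obtain ⟨hdom, hran, hmid, hcomp⟩ := hc
  ext x
  rw [Equiv.Perm.mul_apply, phi_apply hq, phi_apply h₁, phi_apply h₂]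
  set σ₁ := indPerm p₁
  set σ₂ := indPerm p₂
  set σq := indPerm q
  have hσ₁ := indPerm_spec h₁
  have hσ₂ := indPerm_spec h₂
  have hσq := indPerm_spec hq
  set y := phiFun p₂ x with hy
  -- source classes
  have hCdom : cls q.dom x = cls p₂.dom x := by rw [hdom]
  have hymem : y ∈ cls p₂.ran (σ₂ x) := phiFun_mem h₂ x
  -- the class of y for dom p₁ is the class of σ₂ x for ran p₂
  have hDy : cls p₁.dom y = cls p₂.ran (σ₂ x) := by
    rw [← hmid]; exact cls_eq_of_mem hymem
  -- index of y in its class equals index of x in its class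
  have hidx : ((cls p₁.dom y).sort (· ≤ ·)).idxOf y
      = ((cls p₂.dom x).sort (· ≤ ·)).idxOf x := by
    rw [hDy]; exact phiFun_idx h₂ x
  -- the target classes coincide
  have hkey : cls q.ran (σq x) = cls p₁.ran (σ₁ y) := by
    have hq' : Induces q (σ₁ * σ₂) := induces_comp hσ₁ hσ₂ ⟨hdom, hran, hmid, hcomp⟩
    have h12 : (σ₁ * σ₂) x ∈ cls q.ran (σq x) := indep_cls hσq hq' x
    have hy1 : σ₁ y ∈ cls p₁.ran (σ₁ (σ₂ x)) := by
      rw [mem_cls_iff]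
      rintro b ⟨a, ha, rfl⟩
      have haR : a ∈ p₂.ran := hmid ▸ ha
      have hyx : y ∈ a ↔ σ₂ x ∈ a := (mem_cls_iff.1 hymem) a haR
      rw [hσ₁ a ha, Set.mem_image_equiv, Set.mem_image_equiv, Equiv.symm_apply_apply,
        Equiv.symm_apply_apply]
      exact hyx
    have hy1' : σ₁ y ∈ cls q.ran (σq x) := by
      rw [← cls_eq_of_mem h12]
      rw [hran] at hy1
      exact hy1
    rw [← cls_eq_of_mem hy1', hran]
  rw [phiFun, phiFun, hkey, hCdom, ← hidx]
  -- both getD calls: indices are in range, so defaults are irrelevant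
  have hlt : ((cls p₁.dom y).sort (· ≤ ·)).idxOf y
      < ((cls p₁.ran (σ₁ y)).sort (· ≤ ·)).length := by
    rw [Finset.length_sort, card_cls hσ₁ y]
    exact idx_lt y
  rw [List.getD_eq_getElem _ _ hlt, List.getD_eq_getElem _ _ hlt]

end Aux

/-- Lemma 2.1 (Lemma `L:simple`): if each `p ∈ P`, a partial function from `𝒫(X)` to
`𝒫(X)` with `X` finite, is induced by some permutation `σ_p` of `X` (i.e.
`p(a) = σ_p[a]` for `a ∈ dom(p)`), then there is a coherent map `φ : P → Sym(X)`
with `p(a) = φ(p)[a]` for all `a ∈ dom(p)`. -/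
theorem exists_coherent_extension_of_induced
    (X : Type*) [Fintype X] (P : Set (PartFun (Set X)))
    (h : ∀ p ∈ P, ∃ σ : Equiv.Perm X, ∀ a ∈ p.dom, p.toFun a = ⇑σ '' a) :
    ∃ φ : PartFun (Set X) → Equiv.Perm X,
      (∀ p ∈ P, ∀ a ∈ p.dom, p.toFun a = ⇑(φ p) '' a) ∧
      (∀ p₁ p₂ q, p₁ ∈ P → p₂ ∈ P → q ∈ P → PartFun.CoherentTriple p₁ p₂ q →
        φ q = φ p₁ * φ p₂) := by
  letI : LinearOrder X := LinearOrder.lift' (Fintype.equivFin X) (Fintype.equivFin X).injective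
  refine ⟨phi, fun p hp a ha => ?_, fun p₁ p₂ q hp₁ hp₂ hq hc => ?_⟩
  · exact phi_induces (h p hp) a ha
  · exact phi_comp (h p₁ hp₁) (h p₂ hp₂) (h q hq) hc
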